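/- arXiv:2008.12909 — 3 statements merged into one kernel-verified Lean document; each statement's English description precedes it below -/
import Mathlib

section
/- Let f : ℝⁿ → ℝ be D-Lipschitz with D ≥ 0, and let μ > 0. Then for every x ∈ ℝⁿ, f_μ(x) ≤ f(x) + μ·D·√n, where f_μ is the Gaussian-smoothed function of f with parameter μ. -/
open MeasureTheory ProbabilityTheory Real Set

/-- The standard Gaussian measure on `ℝⁿ` (Euclidean space), the product over the `n`
coordinates of the real Gaussian measure with mean 0 and variance 1. -/
noncomputable def stdGaussian (n : ℕ) : Measure (EuclideanSpace ℝ (Fin n)) :=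
  (Measure.pi fun _ : Fin n => gaussianReal 0 1).map
    (MeasurableEquiv.toLp 2 (Fin n → ℝ))

/-- The Gaussian-smoothed function of `f` with smoothing parameter `μ`. -/
noncomputable def gaussianSmoothed {n : ℕ} (f : EuclideanSpace ℝ (Fin n) → ℝ) (μ : ℝ)
    (x : EuclideanSpace ℝ (Fin n)) : ℝ :=
  ∫ ξ, f (x + μ • ξ) ∂(stdGaussian n)


lemma rpow_two_eq (x : ℝ) : x ^ (2:ℝ) = x ^ 2 := by
  rw [show (2:ℝ)=((2:ℕ):ℝ) by norm_num, Real.rpow_natCast]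

lemma gauss_pdf_eq : gaussianPDFReal 0 1 = fun x =>
    (Real.sqrt (2 * Real.pi))⁻¹ * Real.exp (-(1/2) * x ^ 2) := by
  funext x
  simp only [gaussianPDFReal, NNReal.coe_one, mul_one, sub_zero]
  ring_nf

lemma integrable_sq_gauss : Integrable (fun x : ℝ => x ^ 2) (gaussianReal 0 1) := by
  rw [gaussianReal_of_var_ne_zero _ one_ne_zero]
  have hmeas : Measurable fun x => (gaussianPDFReal 0 1 x).toNNReal :=
    (measurable_gaussianPDFReal 0 1).real_toNNReal
  have hpdf : gaussianPDF 0 1 = fun x => ((gaussianPDFReal 0 1 x).toNNReal : ENNReal) := rfl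
  rw [hpdf, integrable_withDensity_iff_integrable_coe_smul hmeas]
  have : (fun x : ℝ => ((gaussianPDFReal 0 1 x).toNNReal : ℝ) • x ^ 2)
      = fun x : ℝ => (Real.sqrt (2 * Real.pi))⁻¹ * (x ^ (2:ℝ) * Real.exp (-((1:ℝ)/2) * x ^ 2)) := by
    funext x
    rw [rpow_two_eq, Real.coe_toNNReal _ (gaussianPDFReal_nonneg 0 1 x), gauss_pdf_eq]
    simp [smul_eq_mul]; ring
  rw [this]
  exact (integrable_rpow_mul_exp_neg_mul_sq (by norm_num : (0:ℝ) < 1/2)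
    (by norm_num : (-1:ℝ) < 2)).const_mul _

lemma integral_sq_gauss : ∫ x, x ^ 2 ∂(gaussianReal 0 1) = 1 := by
  rw [gaussianReal_of_var_ne_zero _ one_ne_zero]
  have hmeas : Measurable fun x => (gaussianPDFReal 0 1 x).toNNReal :=
    (measurable_gaussianPDFReal 0 1).real_toNNReal
  have hpdf : gaussianPDF 0 1 = fun x => ((gaussianPDFReal 0 1 x).toNNReal : ENNReal) := rfl
  rw [hpdf, integral_withDensity_eq_integral_smul hmeas]
  have : (fun x : ℝ => (gaussianPDFReal 0 1 x).toNNReal • x ^ 2)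
      = fun x : ℝ => (Real.sqrt (2 * Real.pi))⁻¹ * (x ^ 2 * Real.exp (-((1:ℝ)/2) * x ^ 2)) := by
    funext x
    rw [NNReal.smul_def, smul_eq_mul, Real.coe_toNNReal _ (gaussianPDFReal_nonneg 0 1 x),
      gauss_pdf_eq]
    ring
  rw [this, integral_const_mul]
  have hmain : ∫ x : ℝ, x ^ 2 * Real.exp (-((1:ℝ)/2) * x ^ 2) = Real.sqrt (2 * Real.pi) := by
    have h2 := integral_comp_abs (f := fun t : ℝ => t ^ 2 * Real.exp (-((1:ℝ)/2) * t ^ 2))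
    simp only [sq_abs] at h2
    have h3 : ∫ x in Ioi (0:ℝ), x ^ 2 * Real.exp (-((1:ℝ)/2) * x ^ 2)
        = ∫ x in Ioi (0:ℝ), x ^ (2:ℝ) * Real.exp (-((1:ℝ)/2) * x ^ (2:ℝ)) := by
      refine setIntegral_congr_fun measurableSet_Ioi fun x hx => ?_
      rw [rpow_two_eq]
    rw [h2, h3, integral_rpow_mul_exp_neg_mul_rpow (by norm_num) (by norm_num) (by norm_num)]
    have hG : Real.Gamma (((2:ℝ) + 1) / 2) = Real.sqrt Real.pi / 2 := by
      rw [show ((2:ℝ)+1)/2 = 1/2 + 1 by norm_num, Real.Gamma_add_one (by norm_num),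
        Real.Gamma_one_half_eq]
      ring
    have hp : ((1:ℝ)/2) ^ (-((2:ℝ)+1)/2) = 2 * Real.sqrt 2 := by
      rw [one_div, ← Real.rpow_neg_one (2:ℝ), ← Real.rpow_mul (by norm_num)]
      rw [show (-1 : ℝ) * (-((2:ℝ)+1)/2) = 1 + 1/2 by norm_num, Real.rpow_add (by norm_num),
        Real.rpow_one, ← Real.sqrt_eq_rpow]
    rw [hG, hp, Real.sqrt_mul (by norm_num)]
    ring
  rw [hmain, inv_mul_cancel₀ (Real.sqrt_ne_zero'.mpr (by positivity))]



lemma pi_map_eval {ι : Type*} [Fintype ι] [DecidableEq ι] {α : ι → Type*} [∀ i, MeasurableSpace (α i)]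
    (μ : ∀ i, Measure (α i)) [∀ i, IsProbabilityMeasure (μ i)] (i : ι) :
    (Measure.pi μ).map (Function.eval i) = μ i := by
  ext s hs
  rw [Measure.map_apply (measurable_pi_apply i) hs, Set.eval_preimage, Measure.pi_pi]
  rw [Finset.prod_eq_single i (fun j _ hj => by simp [Function.update_of_ne hj]) (by simp)]
  simp

instance stdGaussian_prob (n : ℕ) : IsProbabilityMeasure (stdGaussian n) := by
  rw [_root_.stdGaussian]
  exact Measure.isProbabilityMeasure_map (MeasurableEquiv.measurable _).aemeasurable

lemma normsq_eq (n : ℕ) (y : Fin n → ℝ) :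
    ‖(MeasurableEquiv.toLp 2 (Fin n → ℝ)) y‖ ^ 2 = ∑ i, (y i) ^ 2 := by
  rw [EuclideanSpace.norm_eq, Real.sq_sqrt (by positivity)]
  simp [MeasurableEquiv.coe_toLp, sq_abs]

lemma integrable_eval_sq (n : ℕ) (i : Fin n) :
    Integrable (fun y : Fin n → ℝ => (y i) ^ 2)
      (Measure.pi fun _ : Fin n => gaussianReal 0 1) := by
  have h : Integrable (fun x : ℝ => x ^ 2)
      ((Measure.pi fun _ : Fin n => gaussianReal 0 1).map (Function.eval i)) := by
    rw [pi_map_eval]; exact integrable_sq_gauss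
  exact (integrable_map_measure ((measurable_id.pow_const 2).aestronglyMeasurable)
    (measurable_pi_apply i).aemeasurable).mp h

lemma integral_eval_sq (n : ℕ) (i : Fin n) :
    ∫ y, (y i) ^ 2 ∂(Measure.pi fun _ : Fin n => gaussianReal 0 1) = 1 := by
  have h := integral_map (μ := Measure.pi fun _ : Fin n => gaussianReal 0 1)
    (φ := Function.eval i) (measurable_pi_apply i).aemeasurable
    (f := fun x : ℝ => x ^ 2) (by
      rw [pi_map_eval]
      exact (measurable_id.pow_const 2).aestronglyMeasurable)
  rw [pi_map_eval] at h
  rw [← integral_sq_gauss, h]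

lemma integrable_normsq (n : ℕ) :
    Integrable (fun ξ : EuclideanSpace ℝ (Fin n) => ‖ξ‖ ^ 2) (stdGaussian n) := by
  rw [_root_.stdGaussian, integrable_map_equiv]
  have h : ((fun ξ : EuclideanSpace ℝ (Fin n) => ‖ξ‖ ^ 2)
      ∘ (MeasurableEquiv.toLp 2 (Fin n → ℝ))) = fun y => ∑ i, (y i) ^ 2 := by
    funext y; exact normsq_eq n y
  rw [h]
  exact integrable_finset_sum _ fun i _ => integrable_eval_sq n i

lemma integral_normsq (n : ℕ) :
    ∫ ξ, ‖ξ‖ ^ 2 ∂(stdGaussian n) = n := by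
  rw [_root_.stdGaussian, MeasureTheory.integral_map_equiv]
  have h : (fun y : Fin n → ℝ => ‖(MeasurableEquiv.toLp 2 (Fin n → ℝ)) y‖ ^ 2)
      = fun y => ∑ i, (y i) ^ 2 := by
    funext y; rw [normsq_eq]
  rw [h, integral_finset_sum _ fun i _ => integrable_eval_sq n i]
  simp [integral_eval_sq]

lemma integrable_norm_std (n : ℕ) :
    Integrable (fun ξ : EuclideanSpace ℝ (Fin n) => ‖ξ‖) (stdGaussian n) := by
  refine Integrable.mono' ((integrable_const 1).add (integrable_normsq n))
    continuous_norm.aestronglyMeasurable (.of_forall fun ξ => ?_)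
  have h := norm_nonneg ξ
  rw [Real.norm_eq_abs, abs_of_nonneg h]
  show ‖ξ‖ ≤ 1 + ‖ξ‖ ^ 2
  nlinarith [sq_nonneg (‖ξ‖ - 1)]

lemma integral_norm_std_le (n : ℕ) :
    ∫ ξ, ‖ξ‖ ∂(stdGaussian n) ≤ Real.sqrt n := by
  have hmem : MemLp (fun ξ : EuclideanSpace ℝ (Fin n) => ‖ξ‖) 2 (stdGaussian n) :=
    (memLp_two_iff_integrable_sq continuous_norm.aestronglyMeasurable).mpr (integrable_normsq n)
  have hvar := variance_nonneg (fun ξ : EuclideanSpace ℝ (Fin n) => ‖ξ‖) (stdGaussian n)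
  rw [variance_eq_sub hmem] at hvar
  have heq : ∫ x, ((fun ξ : EuclideanSpace ℝ (Fin n) => ‖ξ‖) ^ 2) x ∂(stdGaussian n)
      = (n : ℝ) := by
    rw [← integral_normsq n]
    exact integral_congr_ae (.of_forall fun x => by simp [pow_two])
  rw [heq] at hvar
  have hsq : (∫ ξ, ‖ξ‖ ∂(stdGaussian n)) ^ 2 ≤ (n : ℝ) := by linarith
  have h0 : 0 ≤ ∫ ξ, ‖ξ‖ ∂(stdGaussian n) := integral_nonneg fun ξ => norm_nonneg ξ
  calc ∫ ξ, ‖ξ‖ ∂(stdGaussian n) = Real.sqrt ((∫ ξ, ‖ξ‖ ∂(stdGaussian n)) ^ 2) := by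
        rw [Real.sqrt_sq h0]
    _ ≤ Real.sqrt n := Real.sqrt_le_sqrt hsq


theorem stmt1 (n : ℕ) (hn : 1 ≤ n) (f : EuclideanSpace ℝ (Fin n) → ℝ) (D : ℝ) (hD : 0 ≤ D)
    (hlip : ∀ x y : EuclideanSpace ℝ (Fin n), |f x - f y| ≤ D * ‖x - y‖)
    (μ : ℝ) (hμ : 0 < μ) :
    ∀ x : EuclideanSpace ℝ (Fin n),
      gaussianSmoothed f μ x ≤ f x + μ * D * Real.sqrt n := by
  intro x
  have hcont : Continuous f := by
    have hl : LipschitzWith (Real.toNNReal D) f := by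
      refine LipschitzWith.of_dist_le_mul fun a b => ?_
      rw [Real.dist_eq, Real.coe_toNNReal _ hD, dist_eq_norm]
      exact hlip a b
    exact hl.continuous
  have hnorm : ∀ ξ : EuclideanSpace ℝ (Fin n), ‖x + μ • ξ - x‖ = μ * ‖ξ‖ := fun ξ => by
    rw [add_sub_cancel_left, norm_smul, Real.norm_eq_abs, abs_of_pos hμ]
  have hpt : ∀ ξ : EuclideanSpace ℝ (Fin n), f (x + μ • ξ) ≤ f x + μ * D * ‖ξ‖ := fun ξ => by
    have h := hlip (x + μ • ξ) x
    rw [hnorm ξ] at h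
    have h2 := abs_le.mp h
    nlinarith [h2.2]
  have hint : Integrable (fun ξ : EuclideanSpace ℝ (Fin n) => f (x + μ • ξ)) (stdGaussian n) := by
    refine Integrable.mono' ((integrable_const (|f x|)).add
      ((integrable_norm_std n).const_mul (μ * D)))
      ((hcont.comp (continuous_const.add (continuous_id.const_smul μ))).aestronglyMeasurable) (.of_forall fun ξ => ?_)
    rw [Real.norm_eq_abs]
    have h := hlip (x + μ • ξ) x
    rw [hnorm ξ] at h
    have h2 := abs_le.mp h
    have h3 := abs_le.mp (le_refl |f (x + μ • ξ)|)
    simp only [Pi.add_apply]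
    cases abs_cases (f (x + μ • ξ)) with
    | inl hc => nlinarith [h2.2, le_abs_self (f x), neg_abs_le (f x)]
    | inr hc => nlinarith [h2.1, le_abs_self (f x), neg_abs_le (f x)]
  have hint2 : Integrable (fun ξ : EuclideanSpace ℝ (Fin n) => f x + μ * D * ‖ξ‖)
      (stdGaussian n) :=
    (integrable_const (f x)).add ((integrable_norm_std n).const_mul (μ * D))
  calc gaussianSmoothed f μ x
      ≤ ∫ ξ, (f x + μ * D * ‖ξ‖) ∂(stdGaussian n) := integral_mono hint hint2 hpt
    _ = f x + μ * D * ∫ ξ, ‖ξ‖ ∂(stdGaussian n) := by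
        rw [integral_add (integrable_const _) ((integrable_norm_std n).const_mul (μ * D)),
          integral_const, integral_const_mul]
        simp
    _ ≤ f x + μ * D * Real.sqrt n := by
        have := integral_norm_std_le n
        nlinarith [integral_norm_std_le n, mul_nonneg hμ.le hD]
end

section
/- Let f : ℝⁿ → ℝ be D-Lipschitz with D ≥ 0. Then for every x ∈ ℝⁿ, the Gaussian-smoothed value f_μ(x) converges to f(x) as the smoothing parameter μ tends to 0 from the right; in fact |f_μ(x) − f(x)| ≤ μ·D·√n for every μ > 0. -/
open MeasureTheory ProbabilityTheory Filter

namespace StdGaussianAux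

open Real

lemma integral_sq_exp_half :
    ∫ x : ℝ, x ^ 2 * Real.exp (-(1/2) * x ^ 2) = Real.sqrt (2 * Real.pi) := by
  have h1 : ∫ x : ℝ, x ^ 2 * Real.exp (-(1/2) * x ^ 2)
      = 2 * ∫ x in Set.Ioi (0:ℝ), x ^ 2 * Real.exp (-(1/2) * x ^ 2) := by
    rw [← integral_comp_abs (f := fun x => x ^ 2 * Real.exp (-(1/2) * x ^ 2))]
    congr 1; funext x; rw [sq_abs]
  have h2 : ∫ x in Set.Ioi (0:ℝ), x ^ 2 * Real.exp (-(1/2) * x ^ 2)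
      = ((1:ℝ)/2) ^ (-((2:ℝ)+1)/2) * (1/2) * Real.Gamma (((2:ℝ)+1)/2) := by
    rw [← integral_rpow_mul_exp_neg_mul_rpow two_pos (by norm_num : (-1:ℝ) < 2)
      (by norm_num : (0:ℝ) < 1/2)]
    refine setIntegral_congr_fun measurableSet_Ioi fun x hx => ?_
    rw [rpow_two]
  have hG : Real.Gamma (((2:ℝ)+1)/2) = (1/2) * Real.sqrt π := by
    rw [show ((2:ℝ)+1)/2 = 1/2 + 1 by norm_num, Real.Gamma_add_one (by norm_num),
      Real.Gamma_one_half_eq]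
  have hp : ((1:ℝ)/2) ^ (-((2:ℝ)+1)/2) = 2 * Real.sqrt 2 := by
    rw [show (-((2:ℝ)+1)/2) = -(3/2) by norm_num, one_div, Real.inv_rpow (by norm_num),
      Real.rpow_neg (by norm_num), inv_inv,
      show (3/2 : ℝ) = 1 + 1/2 by norm_num, Real.rpow_add two_pos, Real.rpow_one,
      ← Real.sqrt_eq_rpow]
  rw [h1, h2, hG, hp, Real.sqrt_mul (by norm_num)]
  ring

lemma pdf_eq (x : ℝ) : ((gaussianPDFReal 0 1 x).toNNReal : ℝ)
    = (Real.sqrt (2*π))⁻¹ * (Real.exp (-(1/2) * x ^ 2)) := by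
  rw [Real.coe_toNNReal _ (gaussianPDFReal_nonneg 0 1 x), gaussianPDFReal]
  push_cast
  rw [mul_one, sub_zero, show -x^2/(2*1) = -(1/2)*x^2 by ring]

lemma meas_pdf : Measurable fun x => (gaussianPDFReal 0 1 x).toNNReal :=
  (measurable_gaussianPDFReal 0 1).real_toNNReal

lemma gaussianReal_eq : gaussianReal 0 1
    = (volume : Measure ℝ).withDensity fun x => ((gaussianPDFReal 0 1 x).toNNReal : ENNReal) :=
  gaussianReal_of_var_ne_zero 0 one_ne_zero

lemma integrable_sq_gaussian :
    Integrable (fun x : ℝ => x ^ 2) (gaussianReal 0 1) := by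
  rw [gaussianReal_eq, integrable_withDensity_iff_integrable_smul meas_pdf]
  have h : (fun x : ℝ => (gaussianPDFReal 0 1 x).toNNReal • x ^ 2)
      = fun x => (Real.sqrt (2 * π))⁻¹ * (x ^ 2 * Real.exp (-(1/2) * x ^ 2)) := by
    funext x
    rw [NNReal.smul_def, pdf_eq, smul_eq_mul]
    ring
  rw [h]
  have := (integrable_rpow_mul_exp_neg_mul_sq (by norm_num : (0:ℝ) < 1/2)
    (by norm_num : (-1:ℝ) < 2)).const_mul ((Real.sqrt (2 * π))⁻¹)
  simpa [Real.rpow_two] using this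

lemma integral_sq_gaussian :
    ∫ x : ℝ, x ^ 2 ∂(gaussianReal 0 1) = 1 := by
  rw [gaussianReal_eq, integral_withDensity_eq_integral_smul meas_pdf]
  have h : (fun x : ℝ => (gaussianPDFReal 0 1 x).toNNReal • x ^ 2)
      = fun x => (Real.sqrt (2 * π))⁻¹ * (x ^ 2 * Real.exp (-(1/2) * x ^ 2)) := by
    funext x
    rw [NNReal.smul_def, pdf_eq, smul_eq_mul]
    ring
  rw [h, integral_const_mul, integral_sq_exp_half,
    inv_mul_cancel₀ (Real.sqrt_ne_zero'.mpr (by positivity))]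

instance stdGaussian_prob (n : ℕ) : IsProbabilityMeasure (stdGaussian n) :=
  Measure.isProbabilityMeasure_map (MeasurableEquiv.measurable _).aemeasurable

lemma map_eval_pi {ι : Type*} [Fintype ι] {α : ι → Type*} [∀ i, MeasurableSpace (α i)]
    (μ : ∀ i, Measure (α i)) [∀ i, IsProbabilityMeasure (μ i)] (i : ι) :
    (Measure.pi μ).map (Function.eval i) = μ i := by
  ext s hs
  classical
  rw [Measure.map_apply (measurable_pi_apply i) hs, Set.eval_preimage, Measure.pi_pi,
    Fintype.prod_eq_single i fun j hj => by rw [Function.update_of_ne hj]; exact measure_univ,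
    Function.update_self]

lemma integrable_sq_eval {n : ℕ} (i : Fin n) :
    Integrable (fun y : Fin n → ℝ => (y i) ^ 2) (Measure.pi fun _ => gaussianReal 0 1) := by
  have h := integrable_sq_gaussian
  have key := map_eval_pi (fun _ : Fin n => gaussianReal 0 1) i
  rw [← key] at h
  exact (integrable_map_measure h.aestronglyMeasurable
    (measurable_pi_apply i).aemeasurable).mp h

lemma integral_sq_eval {n : ℕ} (i : Fin n) :
    ∫ y, (y i) ^ 2 ∂(Measure.pi fun _ : Fin n => gaussianReal 0 1) = 1 := by
  have h := integral_sq_gaussian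
  have key := map_eval_pi (fun _ : Fin n => gaussianReal 0 1) i
  have ms : AEStronglyMeasurable (fun x : ℝ => x ^ 2)
      ((Measure.pi fun _ : Fin n => gaussianReal 0 1).map (Function.eval i)) := by
    rw [key]; exact (continuous_pow 2).aestronglyMeasurable
  rw [← key, integral_map (measurable_pi_apply i).aemeasurable ms] at h
  exact h

lemma integral_normSq_stdGaussian (n : ℕ) :
    ∫ ξ, ‖ξ‖ ^ 2 ∂(stdGaussian n) = n := by
  rw [_root_.stdGaussian, integral_map_equiv]
  have hfun : ∀ y : Fin n → ℝ,
      ‖(MeasurableEquiv.toLp 2 (Fin n → ℝ)) y‖ ^ 2 = ∑ i, (y i) ^ 2 := by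
    intro y
    rw [EuclideanSpace.norm_eq, Real.sq_sqrt (by positivity)]
    simp
  simp_rw [hfun]
  rw [integral_finset_sum _ fun i _ => integrable_sq_eval i]
  simp [integral_sq_eval]

lemma integrable_normSq_stdGaussian (n : ℕ) :
    Integrable (fun ξ => ‖ξ‖ ^ 2) (stdGaussian n) := by
  rw [_root_.stdGaussian, integrable_map_measure ((by exact (continuous_norm.pow 2).aestronglyMeasurable :
    AEStronglyMeasurable (fun ξ : EuclideanSpace ℝ (Fin n) => ‖ξ‖ ^ 2) _))
    (MeasurableEquiv.measurable _).aemeasurable]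
  have hfun : ((fun ξ : EuclideanSpace ℝ (Fin n) => ‖ξ‖ ^ 2) ∘
      ⇑(MeasurableEquiv.toLp 2 (Fin n → ℝ)))
      = fun y : Fin n → ℝ => ∑ i, (y i) ^ 2 := by
    funext y
    simp only [Function.comp_apply]
    rw [EuclideanSpace.norm_eq, Real.sq_sqrt (by positivity)]
    simp
  exact hfun ▸ integrable_finset_sum _ fun i _ => integrable_sq_eval i

lemma memLp_norm_stdGaussian (n : ℕ) :
    MemLp (fun ξ : EuclideanSpace ℝ (Fin n) => ‖ξ‖) 2 (stdGaussian n) := by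
  rw [memLp_two_iff_integrable_sq continuous_norm.aestronglyMeasurable]
  exact integrable_normSq_stdGaussian n

lemma integrable_norm_stdGaussian (n : ℕ) :
    Integrable (fun ξ : EuclideanSpace ℝ (Fin n) => ‖ξ‖) (stdGaussian n) :=
  (memLp_norm_stdGaussian n).integrable one_le_two

lemma integral_norm_stdGaussian_le (n : ℕ) :
    ∫ ξ, ‖ξ‖ ∂(stdGaussian n) ≤ Real.sqrt n := by
  have hv := variance_nonneg (fun ξ : EuclideanSpace ℝ (Fin n) => ‖ξ‖) (stdGaussian n)
  rw [variance_eq_sub (memLp_norm_stdGaussian n)] at hv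
  have h2 := integral_normSq_stdGaussian n
  have hle : (∫ ξ, ‖ξ‖ ∂(stdGaussian n)) ^ 2 ≤ (n : ℝ) := by
    simp only [Pi.pow_apply] at hv
    nlinarith [hv, h2]
  have hnn : 0 ≤ ∫ ξ, ‖ξ‖ ∂(stdGaussian n) := integral_nonneg fun _ => norm_nonneg _
  nlinarith [Real.sq_sqrt (Nat.cast_nonneg (α := ℝ) n), Real.sqrt_nonneg (n:ℝ)]

end StdGaussianAux

open StdGaussianAux in
theorem stmt5 (n : ℕ) (hn : 1 ≤ n) (f : EuclideanSpace ℝ (Fin n) → ℝ) (D : ℝ) (hD : 0 ≤ D)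
    (hlip : ∀ x y : EuclideanSpace ℝ (Fin n), |f x - f y| ≤ D * ‖x - y‖) :
    ∀ x : EuclideanSpace ℝ (Fin n),
      Tendsto (fun μ : ℝ => gaussianSmoothed f μ x) (nhdsWithin 0 (Set.Ioi 0)) (nhds (f x)) ∧
      ∀ μ : ℝ, 0 < μ → |gaussianSmoothed f μ x - f x| ≤ μ * D * Real.sqrt n := by
  intro x
  have hcont : Continuous f := by
    refine (LipschitzWith.of_dist_le_mul (K := D.toNNReal) fun a b => ?_).continuous
    rw [Real.coe_toNNReal _ hD, dist_eq_norm, dist_eq_norm, Real.norm_eq_abs]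
    exact hlip a b
  have hbound : ∀ μ : ℝ, 0 < μ → |gaussianSmoothed f μ x - f x| ≤ μ * D * Real.sqrt n := by
    intro μ hμ
    have hnorm : ∀ ξ : EuclideanSpace ℝ (Fin n), ‖x + μ • ξ - x‖ = μ * ‖ξ‖ := by
      intro ξ
      rw [add_sub_cancel_left, norm_smul, Real.norm_eq_abs, abs_of_pos hμ]
    have hint : Integrable (fun ξ => f (x + μ • ξ)) (stdGaussian n) := by
      refine Integrable.mono' ((integrable_const |f x|).add
        (((integrable_norm_stdGaussian n).const_mul (D * μ)))) ?_ ?_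
      · exact (hcont.comp (continuous_const.add ((continuous_id.const_smul
          μ : Continuous fun ξ : EuclideanSpace ℝ (Fin n) => μ • ξ)))).aestronglyMeasurable
      · refine Eventually.of_forall fun ξ => ?_
        have h1 := hlip (x + μ • ξ) x
        rw [hnorm ξ] at h1
        have h2 : |f (x + μ • ξ)| - |f x| ≤ |f (x + μ • ξ) - f x| := abs_sub_abs_le_abs_sub _ _
        rw [Real.norm_eq_abs]
        have hn : 0 ≤ ‖ξ‖ := norm_nonneg _
        simp only [Pi.add_apply]
        nlinarith
    have heq : gaussianSmoothed f μ x - f x = ∫ ξ, (f (x + μ • ξ) - f x) ∂(stdGaussian n) := by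
      rw [gaussianSmoothed, integral_sub hint (integrable_const _), integral_const]
      simp
    rw [heq]
    have hintsub : Integrable (fun ξ => f (x + μ • ξ) - f x) (stdGaussian n) :=
      hint.sub (integrable_const _)
    calc |∫ ξ, (f (x + μ • ξ) - f x) ∂(stdGaussian n)|
        ≤ ∫ ξ, |f (x + μ • ξ) - f x| ∂(stdGaussian n) := by
          simpa [Real.norm_eq_abs] using
            norm_integral_le_integral_norm (fun ξ => f (x + μ • ξ) - f x) (μ := stdGaussian n)
      _ ≤ ∫ ξ, (D * μ) * ‖ξ‖ ∂(stdGaussian n) := by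
          refine integral_mono hintsub.abs ((integrable_norm_stdGaussian n).const_mul _) ?_
          intro ξ
          have h1 := hlip (x + μ • ξ) x
          rw [hnorm ξ] at h1
          simpa [mul_assoc, mul_comm, mul_left_comm] using h1
      _ = (D * μ) * ∫ ξ, ‖ξ‖ ∂(stdGaussian n) := integral_const_mul _ _
      _ ≤ (D * μ) * Real.sqrt n :=
          mul_le_mul_of_nonneg_left (integral_norm_stdGaussian_le n) (by positivity)
      _ = μ * D * Real.sqrt n := by ring
  refine ⟨?_, hbound⟩
  rw [tendsto_iff_dist_tendsto_zero]
  have htend : Tendsto (fun μ : ℝ => μ * (D * Real.sqrt n)) (nhdsWithin 0 (Set.Ioi 0)) (nhds 0) := by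
    have := (continuous_id.mul (continuous_const : Continuous fun _ : ℝ => D * Real.sqrt n)).tendsto 0
    simp only [id_eq, zero_mul, Pi.mul_apply, id] at this
    exact this.mono_left nhdsWithin_le_nhds
  refine squeeze_zero' (Eventually.of_forall fun _ => dist_nonneg) ?_ htend
  refine eventually_nhdsWithin_of_forall fun μ hμ => ?_
  rw [Real.dist_eq]
  calc |gaussianSmoothed f μ x - f x| ≤ μ * D * Real.sqrt n := hbound μ hμ
    _ = μ * (D * Real.sqrt n) := by ring
end

section
/- Let k₁, k₂, k₄, k₅ be positive real constants with k₅ ≤ 1, let k₃, k₆, k₇ ≥ 0, and let α satisfy 0 < α < min{1/k₁, √(k₅/k₄)}. Let u, v : ℕ → ℝ be nonnegative sequences satisfying, for all t, u_{t+1} ≤ (1 − k₁α)·u_t + (k₂α + k₃α²)·v_t + k₆α² and v_{t+1} ≤ (1 − k₅ + k₄α²)·v_t + k₇α². Then limsup_{t→∞} u_t ≤ (k₆α²·(k₅ − k₄α²) + k₇α²·(k₂α + k₃α²)) / (k₁α·(k₅ − k₄α²)). -/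
open Filter

lemma aux_ev (x : ℕ → ℝ) (r c : ℝ) (hr0 : 0 ≤ r) (hr1 : r < 1) (hc : 0 ≤ c) (N : ℕ)
    (hrec : ∀ t, N ≤ t → x (t + 1) ≤ r * x t + c) :
    ∀ ε > 0, ∀ᶠ t in atTop, x t ≤ c / (1 - r) + ε := by
  have h1r : 0 < 1 - r := by linarith
  have hstep : ∀ n, x (N + n) ≤ c / (1 - r) + r ^ n * x N := by
    intro n
    induction n with
    | zero => simp; positivity
    | succ n ih =>
      have h := hrec (N + n) (by omega)
      have hkey : r * (c / (1 - r)) + c = c / (1 - r) := by field_simp; ring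
      have : x (N + (n + 1)) = x ((N + n) + 1) := by ring_nf
      rw [this]
      calc x ((N + n) + 1) ≤ r * x (N + n) + c := h
        _ ≤ r * (c / (1 - r) + r ^ n * x N) + c := by nlinarith
        _ = c / (1 - r) + r ^ (n + 1) * x N := by rw [mul_add, add_right_comm, hkey]; ring
  intro ε hε
  have htend : Tendsto (fun n : ℕ => c / (1 - r) + r ^ n * x N) atTop (nhds (c / (1 - r))) := by
    have := (tendsto_pow_atTop_nhds_zero_of_lt_one hr0 hr1).mul_const (x N)
    simpa using tendsto_const_nhds.add this
  have hev : ∀ᶠ n in atTop, c / (1 - r) + r ^ n * x N < c / (1 - r) + ε :=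
    htend.eventually_lt_const (by linarith)
  obtain ⟨M, hM⟩ := eventually_atTop.1 hev
  filter_upwards [eventually_ge_atTop (N + M)] with t ht
  have h1 : x t = x (N + (t - N)) := by congr 1; omega
  rw [h1]
  exact (hstep (t - N)).trans (hM (t - N) (by omega)).le

lemma aux_limsup (x : ℕ → ℝ) (r c : ℝ) (hr0 : 0 ≤ r) (hr1 : r < 1) (hc : 0 ≤ c)
    (hx : ∀ t, 0 ≤ x t) (N : ℕ)
    (hrec : ∀ t, N ≤ t → x (t + 1) ≤ r * x t + c) :
    limsup x atTop ≤ c / (1 - r) := by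
  apply le_of_forall_pos_le_add
  intro ε hε
  have hcb : IsCoboundedUnder (· ≤ ·) atTop x :=
    (isBoundedUnder_of ⟨0, fun t => hx t⟩ : IsBoundedUnder (· ≥ ·) atTop x).isCoboundedUnder_le
  exact limsup_le_of_le hcb (aux_ev x r c hr0 hr1 hc N hrec ε hε)

theorem stmt13 (k₁ k₂ k₃ k₄ k₅ k₆ k₇ α : ℝ)
    (hk₁ : 0 < k₁) (hk₂ : 0 < k₂) (hk₃ : 0 ≤ k₃) (hk₄ : 0 < k₄)
    (hk₅0 : 0 < k₅) (hk₅1 : k₅ ≤ 1) (hk₆ : 0 ≤ k₆) (hk₇ : 0 ≤ k₇)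
    (hα0 : 0 < α) (hα : α < min (1 / k₁) (Real.sqrt (k₅ / k₄)))
    (u v : ℕ → ℝ) (hu : ∀ t, 0 ≤ u t) (hv : ∀ t, 0 ≤ v t)
    (hrecu : ∀ t, u (t + 1) ≤ (1 - k₁ * α) * u t + (k₂ * α + k₃ * α ^ 2) * v t + k₆ * α ^ 2)
    (hrecv : ∀ t, v (t + 1) ≤ (1 - k₅ + k₄ * α ^ 2) * v t + k₇ * α ^ 2) :
    limsup u atTop ≤
      (k₆ * α ^ 2 * (k₅ - k₄ * α ^ 2) + k₇ * α ^ 2 * (k₂ * α + k₃ * α ^ 2))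
        / (k₁ * α * (k₅ - k₄ * α ^ 2)) := by
  have hα1 : α < 1 / k₁ := lt_of_lt_of_le hα (min_le_left _ _)
  have hα2 : α < Real.sqrt (k₅ / k₄) := lt_of_lt_of_le hα (min_le_right _ _)
  have hβ : 0 < k₅ - k₄ * α ^ 2 := by
    have h : α ^ 2 < k₅ / k₄ := (Real.lt_sqrt hα0.le).mp hα2
    rw [lt_div_iff₀ hk₄] at h
    nlinarith
  have hk₁α : 0 < k₁ * α := mul_pos hk₁ hα0
  have hk₁α1 : k₁ * α < 1 := by
    rw [lt_div_iff₀ hk₁] at hα1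
    nlinarith
  set β := k₅ - k₄ * α ^ 2 with hβdef
  set A := k₂ * α + k₃ * α ^ 2 with hA
  have hApos : 0 < A := by positivity
  set V := k₇ * α ^ 2 / β with hV
  have hVnn : 0 ≤ V := by positivity
  -- v eventually below V + δ
  have hvev : ∀ δ > (0:ℝ), ∀ᶠ t in atTop, v t ≤ V + δ := by
    intro δ hδ
    have h := aux_ev v (1 - k₅ + k₄ * α ^ 2) (k₇ * α ^ 2) (by nlinarith) (by nlinarith)
      (by positivity) 0 (fun t _ => hrecv t) δ hδ
    have : (1 : ℝ) - (1 - k₅ + k₄ * α ^ 2) = β := by rw [hβdef]; ring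
    rwa [this] at h
  -- main estimate: for each δ > 0, limsup u ≤ T + (A/(k₁*α)) * δ
  have hmain : ∀ δ > (0:ℝ), limsup u atTop ≤
      (k₆ * α ^ 2 * β + k₇ * α ^ 2 * A) / (k₁ * α * β) + A / (k₁ * α) * δ := by
    intro δ hδ
    obtain ⟨N, hN⟩ := eventually_atTop.1 (hvev δ hδ)
    have hrec' : ∀ t, N ≤ t → u (t + 1) ≤ (1 - k₁ * α) * u t + (A * (V + δ) + k₆ * α ^ 2) := by
      intro t ht
      have h1 := hrecu t
      have h2 := hN t ht
      nlinarith [hApos, hv t]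
    have hls := aux_limsup u (1 - k₁ * α) (A * (V + δ) + k₆ * α ^ 2)
      (by linarith) (by linarith) (by positivity) hu N hrec'
    have heq : (A * (V + δ) + k₆ * α ^ 2) / (1 - (1 - k₁ * α)) =
        (k₆ * α ^ 2 * β + k₇ * α ^ 2 * A) / (k₁ * α * β) + A / (k₁ * α) * δ := by
      have hβ0 : β ≠ 0 := ne_of_gt hβ
      have hk0 : k₁ * α ≠ 0 := ne_of_gt hk₁α
      rw [hV]
      field_simp
      ring
    rwa [heq] at hls
  -- conclude
  apply le_of_forall_pos_le_add
  intro ε hε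
  have hK : 0 < A / (k₁ * α) := by positivity
  have := hmain (ε / (A / (k₁ * α))) (by positivity)
  calc limsup u atTop ≤ _ := this
    _ = (k₆ * α ^ 2 * β + k₇ * α ^ 2 * A) / (k₁ * α * β) + ε := by
        rw [mul_div_cancel₀ _ (ne_of_gt hK)]
end
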